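/- arXiv:2009.08054 — 2 statements merged into one kernel-verified Lean document; each statement's English description precedes it below -/
import Mathlib

section
/- For every g ≥ 1 and every integer d ≥ 3, the center of the semidirect product (ℤ/d)^{2g} ⋊ Sp(2g, ℤ), where Sp(2g, ℤ) acts on (ℤ/d)^{2g} by reducing matrix entries mod d and acting by matrix multiplication, is trivial. -/
open Matrix

lemma upper_mem {g : ℕ} (S : Matrix (Fin g) (Fin g) ℤ) (hS : Sᵀ = S) :
    Matrix.fromBlocks 1 S 0 1 ∈ Matrix.symplecticGroup (Fin g) ℤ := by
  rw [SymplecticGroup.mem_iff]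
  simp [Matrix.J, Matrix.fromBlocks_multiply, Matrix.fromBlocks_transpose, hS,
    Matrix.fromBlocks_add]

lemma lower_mem {g : ℕ} (S : Matrix (Fin g) (Fin g) ℤ) (hS : Sᵀ = S) :
    Matrix.fromBlocks 1 0 S 1 ∈ Matrix.symplecticGroup (Fin g) ℤ := by
  rw [SymplecticGroup.mem_iff]
  simp [Matrix.J, Matrix.fromBlocks_multiply, Matrix.fromBlocks_transpose, hS,
    Matrix.fromBlocks_add]

/-- For `g ≥ 1` and `d ≥ 3`, the center of the semidirect product
`(ℤ/d)^{2g} ⋊ Sp(2g, ℤ)` (where `Sp(2g, ℤ)` acts by reducing matrix entries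
mod `d` and multiplying, and the multiplication is
`(v, A)(w, B) = (v + A·w, A·B)`) is trivial. -/
theorem stmt_2 (g d : ℕ) (hg : 1 ≤ g) (hd : 3 ≤ d)
    (v : Fin g ⊕ Fin g → ZMod d) (A : Matrix.symplecticGroup (Fin g) ℤ)
    (hcen : ∀ (w : Fin g ⊕ Fin g → ZMod d) (B : Matrix.symplecticGroup (Fin g) ℤ),
      v + ((A : Matrix (Fin g ⊕ Fin g) (Fin g ⊕ Fin g) ℤ).map
            (Int.cast : ℤ → ZMod d)).mulVec w
        = w + ((B : Matrix (Fin g ⊕ Fin g) (Fin g ⊕ Fin g) ℤ).map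
            (Int.cast : ℤ → ZMod d)).mulVec v
      ∧ A * B = B * A) :
    v = 0 ∧ A = 1 := by
  haveI : NeZero g := ⟨by omega⟩
  set M : Matrix (Fin g ⊕ Fin g) (Fin g ⊕ Fin g) ℤ := (A : Matrix (Fin g ⊕ Fin g) (Fin g ⊕ Fin g) ℤ) with hMdef
  -- the reduction of A mod d acts as identity
  have hAbar : ∀ w, (M.map (Int.cast : ℤ → ZMod d)).mulVec w = w := by
    intro w
    have h := (hcen w 1).1
    have h1 : ((1 : Matrix.symplecticGroup (Fin g) ℤ) :
        Matrix (Fin g ⊕ Fin g) (Fin g ⊕ Fin g) ℤ).map (Int.cast : ℤ → ZMod d) = 1 := by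
      simp [Matrix.map_one]
    rw [h1, Matrix.one_mulVec, add_comm w v] at h
    exact add_left_cancel h
  -- matrices commuting with M
  have hcomm : ∀ N (hN : N ∈ Matrix.symplecticGroup (Fin g) ℤ), M * N = N * M := by
    intro N hN
    have := congrArg Subtype.val (hcen 0 ⟨N, hN⟩).2
    simpa using this
  -- vector condition with w = 0
  have hvB : ∀ N (hN : N ∈ Matrix.symplecticGroup (Fin g) ℤ),
      v = (N.map (Int.cast : ℤ → ZMod d)).mulVec v := by
    intro N hN
    have h := (hcen 0 ⟨N, hN⟩).1
    simpa using h
  -- v = 0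
  have hv : v = 0 := by
    have hU := hvB _ (upper_mem (1 : Matrix (Fin g) (Fin g) ℤ) (by simp))
    have hL := hvB _ (lower_mem (1 : Matrix (Fin g) (Fin g) ℤ) (by simp))
    rw [Matrix.fromBlocks_map] at hU hL
    simp only [Matrix.map_one (Int.cast : ℤ → ZMod d) Int.cast_zero Int.cast_one,
      Matrix.map_zero _ Int.cast_zero, Matrix.fromBlocks_mulVec, Matrix.one_mulVec,
      Matrix.zero_mulVec, add_zero, zero_add] at hU hL
    funext i
    cases i with
    | inl i =>
      have := congrFun hL (Sum.inr i)
      simp at this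
      exact this
    | inr i =>
      have := congrFun hU (Sum.inl i)
      simp at this
      exact this
  refine ⟨hv, ?_⟩
  -- block decomposition of M
  obtain ⟨a, b, c, e, hM⟩ : ∃ a b c e, M = Matrix.fromBlocks a b c e :=
    ⟨M.toBlocks₁₁, M.toBlocks₁₂, M.toBlocks₂₁, M.toBlocks₂₂, (Matrix.fromBlocks_toBlocks M).symm⟩
  have hU := hcomm _ (upper_mem (1 : Matrix (Fin g) (Fin g) ℤ) (by simp))
  have hL := hcomm _ (lower_mem (1 : Matrix (Fin g) (Fin g) ℤ) (by simp))
  rw [hM, Matrix.fromBlocks_multiply, Matrix.fromBlocks_multiply, Matrix.fromBlocks_inj] at hU hL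
  simp only [Matrix.mul_one, Matrix.one_mul, Matrix.mul_zero, Matrix.zero_mul, add_zero,
    zero_add] at hU hL
  obtain ⟨hU1, hU2, -, -⟩ := hU
  obtain ⟨hL1, -, -, -⟩ := hL
  have hc : c = 0 := by
    have := hU1.symm
    rwa [add_eq_left] at this
  have hb : b = 0 := by
    have := hL1
    rwa [add_eq_left] at this
  have he : e = a := by
    have h2 := hU2
    rw [add_comm a b] at h2
    exact (add_left_cancel h2).symm
  rw [hb, hc, he] at hM
  -- a commutes with all symmetric matrices
  have hscal : ∀ S : Matrix (Fin g) (Fin g) ℤ, Sᵀ = S → a * S = S * a := by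
    intro S hS
    have h := hcomm _ (upper_mem S hS)
    rw [hM, Matrix.fromBlocks_multiply, Matrix.fromBlocks_multiply, Matrix.fromBlocks_inj] at h
    simpa using h.2.1
  -- hence a is diagonal
  have hdiag : ∀ i k : Fin g, k ≠ i → a k i = 0 := by
    intro i k hk
    have hsym : (Matrix.single i i (1:ℤ))ᵀ = Matrix.single i i 1 := by
      ext p q
      simp [Matrix.single, Matrix.transpose_apply, and_comm]
    have h := congrFun (congrFun (hscal _ hsym) k) i
    rw [Matrix.mul_single_apply_same,
      Matrix.single_mul_apply_of_ne (h := hk)] at h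
    simpa using h
  -- diagonal entries are all equal
  have heq : ∀ i j : Fin g, a i i = a j j := by
    intro i j
    rcases eq_or_ne i j with rfl | hij
    · rfl
    · have hsym : (Matrix.single i j (1:ℤ) + Matrix.single j i 1)ᵀ
          = Matrix.single i j 1 + Matrix.single j i 1 := by
        ext p q
        simp [Matrix.single, Matrix.transpose_apply, and_comm, add_comm]
      have h := congrFun (congrFun (hscal _ hsym) i) j
      rw [Matrix.mul_add, Matrix.add_mul, Matrix.add_apply, Matrix.add_apply,
        Matrix.mul_single_apply_same,
        Matrix.mul_single_apply_of_ne (hbj := Ne.symm hij),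
        Matrix.single_mul_apply_same,
        Matrix.single_mul_apply_of_ne (h := hij)] at h
      simpa using h
  -- a is a scalar matrix
  set lam : ℤ := a 0 0 with hlam
  have ha : a = lam • (1 : Matrix (Fin g) (Fin g) ℤ) := by
    ext k l
    rcases eq_or_ne k l with rfl | hkl
    · simp [heq k 0, hlam]
    · simp [Matrix.one_apply_ne hkl, hdiag l k hkl]
  have hM2 : M = lam • (1 : Matrix (Fin g ⊕ Fin g) (Fin g ⊕ Fin g) ℤ) := by
    rw [hM, ha, ← Matrix.fromBlocks_one, Matrix.fromBlocks_smul, smul_zero]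
  -- symplectic condition gives lam * lam = 1
  have hsymp := SymplecticGroup.mem_iff.mp A.2
  rw [← hMdef, hM2] at hsymp
  have hlam2 : lam * lam = 1 := by
    have h := congrFun (congrFun hsymp (Sum.inr 0)) (Sum.inl 0)
    simp only [Matrix.transpose_smul, Matrix.transpose_one, Matrix.smul_mul, Matrix.mul_smul,
      Matrix.one_mul, Matrix.mul_one, smul_smul, Matrix.smul_apply, smul_eq_mul] at h
    simpa [Matrix.J, Matrix.fromBlocks, Matrix.one_apply] using h
  -- reduction mod d of lam is 1
  have hmod : ((lam : ℤ) : ZMod d) = 1 := by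
    have h := congrFun (hAbar (Pi.single (Sum.inl 0) 1)) (Sum.inl 0)
    rw [Matrix.mulVec_single] at h
    simp only [Pi.single_eq_same, mul_one, Matrix.map_apply] at h
    rw [hM2] at h
    simpa [Matrix.intCast_apply] using h
  -- lam = 1
  have hlam1 : lam = 1 := by
    rcases Int.eq_one_or_neg_one_of_mul_eq_one hlam2 with h1 | h1
    · exact h1
    · exfalso
      rw [h1] at hmod
      have h2 : ((2 : ℕ) : ZMod d) = 0 := by
        push_cast at hmod ⊢
        linear_combination -hmod
      rw [ZMod.natCast_eq_zero_iff] at h2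
      have := Nat.le_of_dvd (by norm_num) h2
      omega
  apply Subtype.ext
  rw [← hMdef, hM2, hlam1, one_smul]
  rfl
end

section
/- For g ≥ 2 and any abelian group A, the coinvariants of the Sp(2g, ℤ)-module ℤ^{2g} ⊗ A (with the standard action on the first factor and trivial action on A) vanish: (ℤ^{2g} ⊗ A)_{Sp(2g,ℤ)} = 0. -/
open Matrix

private lemma transvec_mem_l (g : ℕ) (i : Fin g) (c : ℤ) :
    (1 + Matrix.single (Sum.inl i) (Sum.inr i) c : Matrix (Fin g ⊕ Fin g) (Fin g ⊕ Fin g) ℤ)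
    ∈ Matrix.symplecticGroup (Fin g) ℤ := by
  rw [SymplecticGroup.mem_iff]
  ext p q
  simp [Matrix.mul_apply, Matrix.J, Matrix.fromBlocks, Matrix.single, Fintype.sum_sum_type,
    Matrix.one_apply]
  rcases p with p|p <;> rcases q with q|q <;>
    simp [Matrix.one_apply, ite_and, Finset.sum_ite_eq, Finset.sum_ite_eq', mul_ite, eq_comm] <;>
    split_ifs <;> simp_all

private lemma transvec_mem_r (g : ℕ) (i : Fin g) (c : ℤ) :
    (1 + Matrix.single (Sum.inr i) (Sum.inl i) c : Matrix (Fin g ⊕ Fin g) (Fin g ⊕ Fin g) ℤ)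
    ∈ Matrix.symplecticGroup (Fin g) ℤ := by
  rw [SymplecticGroup.mem_iff]
  ext p q
  simp [Matrix.mul_apply, Matrix.J, Matrix.fromBlocks, Matrix.single, Fintype.sum_sum_type,
    Matrix.one_apply]
  rcases p with p|p <;> rcases q with q|q <;>
    simp [Matrix.one_apply, ite_and, Finset.sum_ite_eq, Finset.sum_ite_eq', mul_ite, eq_comm] <;>
    split_ifs <;> simp_all

private lemma transvec_mulVec (g : ℕ) (p q : Fin g ⊕ Fin g) (hpq : p ≠ q) :
    (1 + Matrix.single p q (1:ℤ)).mulVec (Pi.single q 1) =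
      Pi.single q 1 + Pi.single p 1 := by
  funext r
  simp [Matrix.mulVec, Matrix.single, Matrix.one_apply, dotProduct, ite_and,
    Finset.sum_ite_eq, Finset.sum_ite_eq', Pi.single_apply, mul_ite, eq_comm]
  all_goals split_ifs <;> simp_all

/-- For `g ≥ 2` and any abelian group `A`, the coinvariants of
the `Sp(2g, ℤ)`-module `ℤ^{2g} ⊗ A` vanish; equivalently, the subgroup
generated by all elements `γ·m − m` is the whole group. -/
theorem stmt_8 (g : ℕ) (hg : 2 ≤ g) (A : Type) [AddCommGroup A] :
    AddSubgroup.closure {x : TensorProduct ℤ (Fin g ⊕ Fin g → ℤ) A |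
      ∃ (γ : Matrix.symplecticGroup (Fin g) ℤ)
        (m : TensorProduct ℤ (Fin g ⊕ Fin g → ℤ) A),
        x = TensorProduct.map
              (Matrix.mulVecLin
                (γ : Matrix (Fin g ⊕ Fin g) (Fin g ⊕ Fin g) ℤ))
              LinearMap.id m - m} = ⊤ := by
  rw [eq_top_iff]
  -- key : each basis tensor lies in the closure
  have key : ∀ (j : Fin g ⊕ Fin g) (a : A),
      (Pi.single j 1 : Fin g ⊕ Fin g → ℤ) ⊗ₜ[ℤ] a ∈
      AddSubgroup.closure {x : TensorProduct ℤ (Fin g ⊕ Fin g → ℤ) A |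
        ∃ (γ : Matrix.symplecticGroup (Fin g) ℤ)
          (m : TensorProduct ℤ (Fin g ⊕ Fin g → ℤ) A),
          x = TensorProduct.map
                (Matrix.mulVecLin
                  (γ : Matrix (Fin g ⊕ Fin g) (Fin g ⊕ Fin g) ℤ))
                LinearMap.id m - m} := by
    intro j a
    apply AddSubgroup.subset_closure
    rcases j with i | i
    · refine ⟨⟨_, transvec_mem_l g i 1⟩, (Pi.single (Sum.inr i) 1 : Fin g ⊕ Fin g → ℤ) ⊗ₜ a, ?_⟩
      rw [TensorProduct.map_tmul, Matrix.mulVecLin_apply, LinearMap.id_apply,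
        transvec_mulVec g _ _ (by simp), TensorProduct.add_tmul]
      abel
    · refine ⟨⟨_, transvec_mem_r g i 1⟩, (Pi.single (Sum.inl i) 1 : Fin g ⊕ Fin g → ℤ) ⊗ₜ a, ?_⟩
      rw [TensorProduct.map_tmul, Matrix.mulVecLin_apply, LinearMap.id_apply,
        transvec_mulVec g _ _ (by simp), TensorProduct.add_tmul]
      abel
  intro x _
  induction x using TensorProduct.induction_on with
  | zero => exact zero_mem _
  | tmul v a =>
      have hv : v = ∑ j : Fin g ⊕ Fin g, v j • (Pi.single j 1 : Fin g ⊕ Fin g → ℤ) := by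
        funext r
        simp [Pi.single_apply, Finset.sum_ite_eq', eq_comm]
      rw [hv, TensorProduct.sum_tmul]
      refine AddSubgroup.sum_mem _ fun j _ => ?_
      rw [← TensorProduct.smul_tmul']
      exact AddSubgroup.zsmul_mem _ (key j a) _
  | add x y hx hy => exact add_mem (hx trivial) (hy trivial)
end
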